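/- Let P ⊆ ℝⁿ be a full-dimensional anti-blocking polytope and set Q = conv((2·P × {1}) ∪ ((−2·A(P)) × {−1})) ⊆ ℝⁿ × ℝ. Then the polar Q° equals conv(((−P) × {1}) ∪ (A(P) × {−1})), which is the image of Q under the linear automorphism (x,t) ↦ (−x/2, t); in particular Q is linearly isomorphic to its polar Q°. -/

import Mathlib

open Set Pointwise

/-- `Q ⊆ ℝⁿ` is anti-blocking: contained in the nonnegative orthant and down-closed
within it. -/
def IsAntiBlocking {n : ℕ} (Q : Set (Fin n → ℝ)) : Prop :=
  (∀ x ∈ Q, ∀ i, 0 ≤ x i) ∧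
  ∀ q ∈ Q, ∀ p : Fin n → ℝ, (∀ i, 0 ≤ p i ∧ p i ≤ q i) → p ∈ Q

/-- `Q` is a polytope: the convex hull of a finite set. -/
def IsPolytope {n : ℕ} (Q : Set (Fin n → ℝ)) : Prop :=
  ∃ V : Finset (Fin n → ℝ), Q = convexHull ℝ (V : Set (Fin n → ℝ))

/-- The anti-blocking polytope `A(Q)` associated to `Q ⊆ ℝⁿ_{≥0}`. -/
def antiBlocker {n : ℕ} (Q : Set (Fin n → ℝ)) : Set (Fin n → ℝ) :=
  {d | (∀ i, 0 ≤ d i) ∧ ∀ x ∈ Q, ∑ i, d i * x i ≤ 1}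

/-- The Cayley polytope `conv((Q₁ × {1}) ∪ (Q₂ × {−1})) ⊆ ℝⁿ × ℝ`. -/
def cayley {n : ℕ} (Q₁ Q₂ : Set (Fin n → ℝ)) : Set ((Fin n → ℝ) × ℝ) :=
  convexHull ℝ
    (((fun x => (x, (1 : ℝ))) '' Q₁) ∪ ((fun x => (x, (-1 : ℝ))) '' Q₂))

/-- The polar of a subset of `ℝⁿ × ℝ` with respect to the standard inner product. -/
def polarNR {n : ℕ} (S : Set ((Fin n → ℝ) × ℝ)) : Set ((Fin n → ℝ) × ℝ) :=
  {y | ∀ x ∈ S, (∑ i, y.1 i * x.1 i) + y.2 * x.2 ≤ 1}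

namespace CayleyAux

variable {n : ℕ}

lemma isLinear_pair (c : Fin n → ℝ) (t : ℝ) :
    IsLinearMap ℝ (fun z : (Fin n → ℝ) × ℝ => (∑ i, z.1 i * c i) + z.2 * t) := by
  constructor
  · intro z w
    simp only [Prod.fst_add, Prod.snd_add, Pi.add_apply, add_mul, Finset.sum_add_distrib]
    ring
  · intro m z
    simp only [Prod.smul_fst, Prod.smul_snd, Pi.smul_apply, smul_eq_mul, mul_add,
      Finset.mul_sum, mul_assoc]

lemma convex_polarNR (S : Set ((Fin n → ℝ) × ℝ)) : Convex ℝ (polarNR S) := by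
  have h : polarNR S = ⋂ x ∈ S,
      {y : (Fin n → ℝ) × ℝ | (∑ i, y.1 i * x.1 i) + y.2 * x.2 ≤ 1} := by
    ext y; simp [polarNR]
  rw [h]
  exact convex_iInter₂ fun x _ => convex_halfSpace_le (isLinear_pair x.1 x.2) 1

lemma mem_polarNR_cayley_iff (Q₁ Q₂ : Set (Fin n → ℝ)) (y : (Fin n → ℝ) × ℝ) :
    y ∈ polarNR (cayley Q₁ Q₂) ↔
      (∀ x ∈ Q₁, (∑ i, y.1 i * x i) + y.2 ≤ 1) ∧
      (∀ x ∈ Q₂, (∑ i, y.1 i * x i) - y.2 ≤ 1) := by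
  constructor
  · intro h
    refine ⟨fun x hx => ?_, fun x hx => ?_⟩
    · have := h (x, 1) (subset_convexHull ℝ _ (Or.inl ⟨x, hx, rfl⟩))
      simpa using this
    · have := h (x, -1) (subset_convexHull ℝ _ (Or.inr ⟨x, hx, rfl⟩))
      simpa [sub_eq_add_neg] using this
  · rintro ⟨h₁, h₂⟩ z hz
    have hsub : cayley Q₁ Q₂ ⊆
        {z : (Fin n → ℝ) × ℝ | (∑ i, z.1 i * y.1 i) + z.2 * y.2 ≤ 1} := by
      apply convexHull_min _ (convex_halfSpace_le (isLinear_pair y.1 y.2) 1)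
      rintro z (⟨x, hx, rfl⟩ | ⟨x, hx, rfl⟩)
      · have := h₁ x hx
        simp only [mem_setOf_eq, one_mul]
        calc (∑ i, x i * y.1 i) + y.2 = (∑ i, y.1 i * x i) + y.2 := by
              rw [Finset.sum_congr rfl fun i _ => mul_comm _ _]
          _ ≤ 1 := this
      · have := h₂ x hx
        simp only [mem_setOf_eq, neg_one_mul]
        calc (∑ i, x i * y.1 i) + -y.2 = (∑ i, y.1 i * x i) - y.2 := by
              rw [Finset.sum_congr rfl fun i _ => mul_comm _ _]; ring
          _ ≤ 1 := this
    have h3 := hsub hz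
    simp only [mem_setOf_eq] at h3
    calc (∑ i, y.1 i * z.1 i) + y.2 * z.2 = (∑ i, z.1 i * y.1 i) + z.2 * y.2 := by
          rw [Finset.sum_congr rfl fun i _ => mul_comm _ _, mul_comm y.2]
      _ ≤ 1 := h3

/-- The bipolar theorem for anti-blocking polytopes. -/
lemma mem_of_forall_antiBlocker (P : Set (Fin n → ℝ)) (hpoly : IsPolytope P)
    (hab : IsAntiBlocking P) (h0 : (0 : Fin n → ℝ) ∈ P)
    (x : Fin n → ℝ) (hx0 : ∀ i, 0 ≤ x i)
    (hx : ∀ a ∈ antiBlocker P, ∑ i, a i * x i ≤ 1) : x ∈ P := by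
  by_contra hxP
  have hconv : Convex ℝ P := by
    obtain ⟨V, rfl⟩ := hpoly; exact convex_convexHull ℝ _
  have hclosed : IsClosed P := by
    obtain ⟨V, rfl⟩ := hpoly
    exact (V : Set (Fin n → ℝ)).toFinite.isClosed_convexHull ℝ
  obtain ⟨f, u, hfu, hux⟩ := geometric_hahn_banach_closed_point hconv hclosed hxP
  have hu : 0 < u := by have := hfu 0 h0; simpa using this
  set c : Fin n → ℝ := fun i => f (fun j => if i = j then 1 else 0) with hc
  have hf : ∀ y : Fin n → ℝ, f y = ∑ i, y i * c i := by
    intro y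
    conv_lhs => rw [pi_eq_sum_univ y, map_sum]
    exact Finset.sum_congr rfl fun i _ => by rw [map_smul]; rfl
  set a : Fin n → ℝ := fun i => max (c i / u) 0 with ha
  have haA : a ∈ antiBlocker P := by
    refine ⟨fun i => le_max_right _ _, fun x' hx' => ?_⟩
    set x'' : Fin n → ℝ := fun i => if 0 ≤ c i then x' i else 0 with hx''
    have hx''P : x'' ∈ P := by
      refine hab.2 x' hx' x'' fun i => ?_
      by_cases h : 0 ≤ c i <;> simp [hx'', h, hab.1 x' hx' i]
    have key : ∑ i, a i * x' i = f x'' / u := by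
      rw [hf, Finset.sum_div]
      refine Finset.sum_congr rfl fun i _ => ?_
      by_cases h : 0 ≤ c i
      · have : max (c i / u) 0 = c i / u := max_eq_left (div_nonneg h hu.le)
        simp [ha, hx'', h, this]; ring
      · have hneg : c i / u < 0 := div_neg_of_neg_of_pos (not_le.1 h) hu
        simp [ha, hx'', h, max_eq_right hneg.le]
    rw [key]
    exact le_of_lt ((div_lt_one hu).2 (hfu x'' hx''P))
  have h1 : f x / u ≤ ∑ i, a i * x i := by
    rw [hf, Finset.sum_div]
    refine Finset.sum_le_sum fun i _ => ?_
    calc x i * c i / u = (c i / u) * x i := by ring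
      _ ≤ a i * x i := mul_le_mul_of_nonneg_right (le_max_left _ _) (hx0 i)
  have h2 : 1 < f x / u := (one_lt_div hu).2 hux
  have := hx a haA
  linarith

lemma exists_pos_antiBlocker (P : Set (Fin n → ℝ)) (hpoly : IsPolytope P) :
    ∃ ε : ℝ, 0 < ε ∧ (fun _ => ε) ∈ antiBlocker P := by
  obtain ⟨V, rfl⟩ := hpoly
  obtain ⟨C, hC⟩ := isBounded_iff_forall_norm_le.1
    (((V : Set (Fin n → ℝ)).toFinite.isCompact_convexHull ℝ).isBounded)
  set M : ℝ := max C 0 with hM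
  have hM0 : 0 ≤ M := le_max_right _ _
  set P' := convexHull ℝ (V : Set (Fin n → ℝ))
  refine ⟨(((n : ℝ) + 1) * (M + 1))⁻¹, by positivity, fun i => by positivity, fun x hx => ?_⟩
  have hxM : ∀ i, x i ≤ M := by
    intro i
    have h1 : x i ≤ ‖x‖ := by
      have := norm_le_pi_norm x i
      rw [Real.norm_eq_abs] at this
      exact (le_abs_self _).trans this
    exact h1.trans ((hC x hx).trans (le_max_left _ _))
  have hε0 : (0:ℝ) ≤ (((n : ℝ) + 1) * (M + 1))⁻¹ := by positivity
  calc ∑ i, (((n : ℝ) + 1) * (M + 1))⁻¹ * x i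
      ≤ ∑ _i : Fin n, (((n : ℝ) + 1) * (M + 1))⁻¹ * M :=
        Finset.sum_le_sum fun i _ => mul_le_mul_of_nonneg_left (hxM i) hε0
    _ = (n : ℝ) * ((((n : ℝ) + 1) * (M + 1))⁻¹ * M) := by
        rw [Finset.sum_const, Finset.card_univ, Fintype.card_fin, nsmul_eq_mul]
    _ ≤ 1 := by
        have hD : (0:ℝ) < ((n : ℝ) + 1) * (M + 1) := by positivity
        rw [show (n : ℝ) * ((((n : ℝ) + 1) * (M + 1))⁻¹ * M)
            = ((n : ℝ) * M) / (((n : ℝ) + 1) * (M + 1)) by field_simp,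
          div_le_one hD]
        have hn : (0:ℝ) ≤ (n : ℝ) := Nat.cast_nonneg n
        nlinarith

lemma exists_pos_interior (P : Set (Fin n → ℝ)) (hab : IsAntiBlocking P)
    (hfull : (interior P).Nonempty) : ∃ q ∈ P, ∀ i, 0 < q i := by
  obtain ⟨q, hq⟩ := hfull
  obtain ⟨δ, hδ, hball⟩ := Metric.isOpen_iff.1 isOpen_interior q hq
  refine ⟨q, interior_subset hq, fun i => ?_⟩
  classical
  set y : Fin n → ℝ := Function.update q i (q i - δ / 2) with hy
  have hyP : y ∈ P := by
    refine interior_subset (hball ?_)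
    rw [Metric.mem_ball]
    have h2 : dist y q ≤ δ / 2 := by
      refine (dist_pi_le_iff (by positivity)).2 fun j => ?_
      by_cases h : j = i
      · subst h
        rw [hy, Function.update_self, Real.dist_eq,
          show q j - δ / 2 - q j = -(δ / 2) by ring, abs_neg, abs_of_nonneg (by positivity)]
      · rw [hy, Function.update_of_ne h, dist_self]
        positivity
    linarith
  have h3 : 0 ≤ y i := hab.1 y hyP i
  rw [hy, Function.update_self] at h3
  linarith

end CayleyAux

/-- For a full-dimensional anti-blocking polytope `P`, the Cayley polytope
`Q = conv((2P × {1}) ∪ ((−2·A(P)) × {−1}))` satisfies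
`Q° = conv(((−P) × {1}) ∪ (A(P) × {−1}))`, the image of `Q` under `(x,t) ↦ (−x/2, t)`;
in particular `Q` is linearly isomorphic to its polar. -/
theorem cayley_antiBlocker_selfdual
    {n : ℕ} (P : Set (Fin n → ℝ))
    (hpoly : IsPolytope P) (hab : IsAntiBlocking P)
    (hfull : (interior P).Nonempty) :
    polarNR (cayley ((2 : ℝ) • P) ((-2 : ℝ) • antiBlocker P)) =
      cayley (-P) (antiBlocker P) ∧
    polarNR (cayley ((2 : ℝ) • P) ((-2 : ℝ) • antiBlocker P)) =
      (fun p : (Fin n → ℝ) × ℝ => (-(1 / 2 : ℝ) • p.1, p.2)) ''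
        cayley ((2 : ℝ) • P) ((-2 : ℝ) • antiBlocker P) := by
  classical
  set A := antiBlocker P with hA
  have h0P : (0 : Fin n → ℝ) ∈ P := by
    obtain ⟨q, hq⟩ := hfull
    exact hab.2 q (interior_subset hq) 0
      (fun i => ⟨le_refl 0, hab.1 q (interior_subset hq) i⟩)
  have h0A : (0 : Fin n → ℝ) ∈ A := ⟨fun i => le_refl 0, fun x _ => by simp⟩
  obtain ⟨ε, hε, hεA⟩ := CayleyAux.exists_pos_antiBlocker P hpoly
  obtain ⟨q0, hq0P, hq0pos⟩ := CayleyAux.exists_pos_interior P hab hfull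
  have key : polarNR (cayley ((2 : ℝ) • P) ((-2 : ℝ) • A)) = cayley (-P) A := by
    apply Subset.antisymm
    · -- hard direction
      intro y hy
      obtain ⟨d, s⟩ := y
      obtain ⟨hy1, hy2⟩ := (CayleyAux.mem_polarNR_cayley_iff _ _ _).1 hy
      have hP' : ∀ q ∈ P, (∑ i, d i * q i) ≤ (1 - s) / 2 := by
        intro q hq
        have h2 := hy1 ((2 : ℝ) • q) (smul_mem_smul_set hq)
        have h3 : ∑ i, d i * ((2 : ℝ) • q) i = 2 * ∑ i, d i * q i := by
          rw [Finset.mul_sum]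
          refine Finset.sum_congr rfl fun i _ => ?_
          simp only [Pi.smul_apply, smul_eq_mul]; ring
        rw [h3] at h2
        simp only at h2
        linarith
      have hA' : ∀ a ∈ A, -(∑ i, d i * a i) ≤ (1 + s) / 2 := by
        intro a haA
        have h2 := hy2 ((-2 : ℝ) • a) (smul_mem_smul_set haA)
        have h3 : ∑ i, d i * ((-2 : ℝ) • a) i = -2 * ∑ i, d i * a i := by
          rw [Finset.mul_sum]
          refine Finset.sum_congr rfl fun i _ => ?_
          simp only [Pi.smul_apply, smul_eq_mul]; ring
        rw [h3] at h2
        simp only at h2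
        linarith
      set lam : ℝ := (1 + s) / 2 with hlam
      have hlam0 : 0 ≤ lam := by
        have := hA' 0 h0A
        simp only [Pi.zero_apply, mul_zero, Finset.sum_const_zero, neg_zero] at this
        rw [hlam]; linarith
      have hlam1 : lam ≤ 1 := by
        have := hP' 0 h0P
        simp only [Pi.zero_apply, mul_zero, Finset.sum_const_zero] at this
        rw [hlam]; linarith
      set dp : Fin n → ℝ := fun i => max (d i) 0 with hdp
      set dm : Fin n → ℝ := fun i => max (-d i) 0 with hdm
      have hd : ∀ i, d i = dp i - dm i := by
        intro i
        rcases le_total (d i) 0 with h | h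
        · rw [show dp i = 0 from max_eq_right h,
            show dm i = -d i from max_eq_left (by linarith)]; ring
        · rw [show dp i = d i from max_eq_left h,
            show dm i = 0 from max_eq_right (by linarith)]; ring
      have claimA : ∀ q ∈ P, ∑ i, dp i * q i ≤ 1 - lam := by
        intro q hq
        set q' : Fin n → ℝ := fun i => if 0 ≤ d i then q i else 0 with hq'
        have hq'P : q' ∈ P := by
          refine hab.2 q hq q' fun i => ?_
          by_cases h : 0 ≤ d i <;> simp [hq', h, hab.1 q hq i]
        have h1 := hP' q' hq'P
        have heq : ∑ i, d i * q' i = ∑ i, dp i * q i := by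
          refine Finset.sum_congr rfl fun i _ => ?_
          by_cases h : 0 ≤ d i
          · simp [hq', h, hdp, max_eq_left h]
          · simp [hq', h, hdp, max_eq_right (le_of_not_ge h)]
        rw [heq] at h1
        rw [hlam]; linarith
      have claimB : ∀ a ∈ A, ∑ i, a i * dm i ≤ lam := by
        intro a haA
        set a' : Fin n → ℝ := fun i => if d i < 0 then a i else 0 with ha'
        have ha'A : a' ∈ A := by
          refine ⟨fun i => ?_, fun x hx => ?_⟩
          · by_cases h : d i < 0 <;> simp [ha', h, haA.1 i]
          · refine le_trans (Finset.sum_le_sum fun i _ => ?_) (haA.2 x hx)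
            by_cases h : d i < 0
            · simp [ha', h]
            · simp only [ha', if_neg h, zero_mul]
              exact mul_nonneg (haA.1 i) (hab.1 x hx i)
        have h1 := hA' a' ha'A
        have heq : -(∑ i, d i * a' i) = ∑ i, a i * dm i := by
          rw [← Finset.sum_neg_distrib]
          refine Finset.sum_congr rfl fun i _ => ?_
          by_cases h : d i < 0
          · rw [show dm i = -d i from max_eq_left (by linarith)]
            simp [ha', h]; ring
          · rw [show dm i = 0 from max_eq_right (by simp at h; linarith)]
            simp [ha', h]
        rw [heq] at h1
        rw [hlam]; linarith
      obtain ⟨p, hpP, hp_eq⟩ : ∃ p ∈ P, ∀ i, lam * p i = dm i := by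
        by_cases hl : lam = 0
        · refine ⟨0, h0P, fun i => ?_⟩
          have h1 := claimB (fun _ => ε) hεA
          rw [hl] at h1
          have hterm : ∀ j ∈ Finset.univ, (0:ℝ) ≤ ε * dm j :=
            fun j _ => mul_nonneg hε.le (le_max_right _ _)
          have hzero : ∑ j, ε * dm j = 0 :=
            le_antisymm h1 (Finset.sum_nonneg hterm)
          have h2 := (Finset.sum_eq_zero_iff_of_nonneg hterm).1 hzero i (Finset.mem_univ i)
          rcases mul_eq_zero.1 h2 with h | h
          · exact absurd h hε.ne'
          · simp [hl, h]
        · have hlpos : 0 < lam := lt_of_le_of_ne hlam0 (Ne.symm hl)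
          refine ⟨lam⁻¹ • dm, ?_, fun i => ?_⟩
          · refine CayleyAux.mem_of_forall_antiBlocker P hpoly hab h0P _
              (fun i => mul_nonneg (inv_nonneg.2 hlam0) (le_max_right _ _)) ?_
            intro a haA
            have h1 := claimB a haA
            have h2 : ∑ i, a i * (lam⁻¹ • dm) i = (∑ i, a i * dm i) / lam := by
              rw [Finset.sum_div]
              refine Finset.sum_congr rfl fun i _ => ?_
              simp only [Pi.smul_apply, smul_eq_mul]
              field_simp
            rw [h2, div_le_one hlpos]
            exact h1
          · simp only [Pi.smul_apply, smul_eq_mul]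
            field_simp
      obtain ⟨aa, haaA, ha_eq⟩ : ∃ aa ∈ A, ∀ i, (1 - lam) * aa i = dp i := by
        by_cases hl : lam = 1
        · refine ⟨0, h0A, fun i => ?_⟩
          have h1 := claimA q0 hq0P
          rw [hl] at h1
          have hterm : ∀ j ∈ Finset.univ, (0:ℝ) ≤ dp j * q0 j :=
            fun j _ => mul_nonneg (le_max_right _ _) (hq0pos j).le
          have hzero : ∑ j, dp j * q0 j = 0 :=
            le_antisymm (by linarith) (Finset.sum_nonneg hterm)
          have h2 := (Finset.sum_eq_zero_iff_of_nonneg hterm).1 hzero i (Finset.mem_univ i)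
          rcases mul_eq_zero.1 h2 with h | h
          · simp [h]
          · exact absurd h (hq0pos i).ne'
        · have hlpos : 0 < 1 - lam :=
            lt_of_le_of_ne (by linarith) (fun h => hl (by linarith))
          refine ⟨(1 - lam)⁻¹ • dp, ⟨fun i =>
            mul_nonneg (inv_nonneg.2 hlpos.le) (le_max_right _ _), ?_⟩, fun i => ?_⟩
          · intro x hx
            have h1 := claimA x hx
            have h2 : ∑ i, ((1 - lam)⁻¹ • dp) i * x i = (∑ i, dp i * x i) / (1 - lam) := by
              rw [Finset.sum_div]
              refine Finset.sum_congr rfl fun i _ => ?_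
              simp only [Pi.smul_apply, smul_eq_mul]
              field_simp
            rw [h2, div_le_one hlpos]
            exact h1
          · simp only [Pi.smul_apply, smul_eq_mul]
            field_simp
      have hmem : ((d, s) : (Fin n → ℝ) × ℝ) ∈
          segment ℝ ((-p, 1) : (Fin n → ℝ) × ℝ) ((aa, -1) : (Fin n → ℝ) × ℝ) := by
        refine ⟨lam, 1 - lam, hlam0, by linarith, by ring, ?_⟩
        have hfst : lam • (-p) + (1 - lam) • aa = d := by
          funext i
          simp only [Pi.add_apply, Pi.smul_apply, Pi.neg_apply, smul_eq_mul]
          have h1 := hp_eq i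
          have h2 := ha_eq i
          rw [hd i]; linarith
        have hsnd : lam • (1:ℝ) + (1 - lam) • (-1:ℝ) = s := by
          simp only [smul_eq_mul]
          rw [hlam]; ring
        show (lam • ((-p, 1) : (Fin n → ℝ) × ℝ) + (1 - lam) • ((aa, -1) : (Fin n → ℝ) × ℝ)) = (d, s)
        rw [Prod.ext_iff]
        constructor
        · simpa using hfst
        · simpa using hsnd
      refine segment_subset_convexHull ?_ ?_ hmem
      · exact Or.inl ⟨-p, Set.neg_mem_neg.2 hpP, rfl⟩
      · exact Or.inr ⟨aa, haaA, rfl⟩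
    · -- easy direction
      apply convexHull_min _ (CayleyAux.convex_polarNR _)
      rintro y (⟨x, hx, rfl⟩ | ⟨a, haA, rfl⟩)
      · have hpP : -x ∈ P := Set.mem_neg.1 hx
        rw [CayleyAux.mem_polarNR_cayley_iff]
        constructor
        · rintro z ⟨q, hqP, rfl⟩
          have h3 : ∑ i, x i * ((2 : ℝ) • q) i = -2 * ∑ i, (-x) i * q i := by
            rw [Finset.mul_sum]
            refine Finset.sum_congr rfl fun i _ => ?_
            simp only [Pi.smul_apply, smul_eq_mul, Pi.neg_apply]; ring
          have hnn : 0 ≤ ∑ i, (-x) i * q i :=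
            Finset.sum_nonneg fun i _ => mul_nonneg (hab.1 _ hpP i) (hab.1 q hqP i)
          simp only [h3]
          linarith
        · rintro z ⟨a, haA, rfl⟩
          have h3 : ∑ i, x i * ((-2 : ℝ) • a) i = 2 * ∑ i, a i * (-x) i := by
            rw [Finset.mul_sum]
            refine Finset.sum_congr rfl fun i _ => ?_
            simp only [Pi.smul_apply, smul_eq_mul, Pi.neg_apply]; ring
          have hb := haA.2 (-x) hpP
          simp only [h3]
          linarith
      · rw [CayleyAux.mem_polarNR_cayley_iff]
        constructor
        · rintro z ⟨q, hqP, rfl⟩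
          have h3 : ∑ i, a i * ((2 : ℝ) • q) i = 2 * ∑ i, a i * q i := by
            rw [Finset.mul_sum]
            refine Finset.sum_congr rfl fun i _ => ?_
            simp only [Pi.smul_apply, smul_eq_mul]; ring
          have hb := haA.2 q hqP
          simp only [h3]
          linarith
        · rintro z ⟨a', ha'A, rfl⟩
          have h3 : ∑ i, a i * ((-2 : ℝ) • a') i = -2 * ∑ i, a i * a' i := by
            rw [Finset.mul_sum]
            refine Finset.sum_congr rfl fun i _ => ?_
            simp only [Pi.smul_apply, smul_eq_mul]; ring
          have hnn : 0 ≤ ∑ i, a i * a' i :=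
            Finset.sum_nonneg fun i _ => mul_nonneg (haA.1 i) (ha'A.1 i)
          simp only [h3]
          linarith
  refine ⟨key, ?_⟩
  rw [key]
  set L : ((Fin n → ℝ) × ℝ) →ₗ[ℝ] ((Fin n → ℝ) × ℝ) :=
    LinearMap.prod ((-(1 / 2 : ℝ)) • LinearMap.fst ℝ (Fin n → ℝ) ℝ)
      (LinearMap.snd ℝ (Fin n → ℝ) ℝ) with hL
  have hLfun : (fun p : (Fin n → ℝ) × ℝ => (-(1 / 2 : ℝ) • p.1, p.2)) = ⇑L := by
    funext p
    simp [hL]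
  rw [hLfun]
  simp only [cayley]
  rw [L.image_convexHull]
  congr 1
  rw [Set.image_union, ← Set.image_comp, ← Set.image_comp]
  have hc1 : (⇑L ∘ fun x : Fin n → ℝ => (x, (1:ℝ))) =
      (fun x : Fin n → ℝ => ((-(1 / 2 : ℝ)) • x, (1:ℝ))) := by
    funext x; simp [hL]
  have hc2 : (⇑L ∘ fun x : Fin n → ℝ => (x, (-1:ℝ))) =
      (fun x : Fin n → ℝ => ((-(1 / 2 : ℝ)) • x, (-1:ℝ))) := by
    funext x; simp [hL]
  rw [hc1, hc2]
  have him1 : (fun x : Fin n → ℝ => (-(1 / 2 : ℝ)) • x) '' ((2 : ℝ) • P) = -P := by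
    ext x
    simp only [Set.mem_image, Set.mem_neg]
    constructor
    · rintro ⟨z, ⟨q, hq, rfl⟩, rfl⟩
      have h : (-(1 / 2 : ℝ)) • ((2 : ℝ) • q) = -q := by
        rw [smul_smul, show (-(1 / 2 : ℝ)) * 2 = -1 by norm_num, neg_one_smul]
      rw [h, neg_neg]
      exact hq
    · intro hx
      refine ⟨(2 : ℝ) • (-x), smul_mem_smul_set hx, ?_⟩
      rw [smul_smul, show (-(1 / 2 : ℝ)) * 2 = -1 by norm_num, neg_one_smul, neg_neg]
  have him2 : (fun x : Fin n → ℝ => (-(1 / 2 : ℝ)) • x) '' ((-2 : ℝ) • A) = A := by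
    ext x
    simp only [Set.mem_image]
    constructor
    · rintro ⟨z, ⟨a, ha, rfl⟩, rfl⟩
      have h : (-(1 / 2 : ℝ)) • ((-2 : ℝ) • a) = a := by
        rw [smul_smul, show (-(1 / 2 : ℝ)) * (-2) = 1 by norm_num, one_smul]
      rw [h]
      exact ha
    · intro hx
      refine ⟨(-2 : ℝ) • x, smul_mem_smul_set hx, ?_⟩
      rw [smul_smul, show (-(1 / 2 : ℝ)) * (-2) = 1 by norm_num, one_smul]
  rw [show (fun x : Fin n → ℝ => ((-(1 / 2 : ℝ)) • x, (1:ℝ))) =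
      ((fun x : Fin n → ℝ => (x, (1:ℝ))) ∘ fun x => (-(1 / 2 : ℝ)) • x) from rfl,
    show (fun x : Fin n → ℝ => ((-(1 / 2 : ℝ)) • x, (-1:ℝ))) =
      ((fun x : Fin n → ℝ => (x, (-1:ℝ))) ∘ fun x => (-(1 / 2 : ℝ)) • x) from rfl,
    Set.image_comp, Set.image_comp, him1, him2]
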